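/- Let F(Y,X,t) = Y^{1/γ}·exp(A(t) + B(t)X + ½C(t)X²) where A, B, C solve the Riccati system A' = ((γ-1)/γ)r - λX̄B - ½σ_X²C - ½cB², B' = -λX̄C - (b/2 + cC)B, C' = -a - bC - cC², with a = (1-γ)/γ², b = 2(-λ + ((1-γ)/γ)ρσ_X), c = σ_X²(ρ²+γ(1-ρ²)). Then F satisfies the PDE ½F_{YY}Y²(X² + ν*²(1-ρ²)) + F_{XY}Yσ_X(ρX + ν*(1-ρ²)) + ½F_{XX}σ_X² - F_X(σ_X(ρX + ν*(1-ρ²)) + λ(X - X̄)) + F_t - rF + rF_Y·Y = 0, where ν* = ν*(Y,X,t) = -σ_X F_X/(Y F_Y) = -γσ_X(B(t) + C(t)X). -/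

import Mathlib

/-- The candidate value function F(Y,X,t) = Y^{1/γ} exp(A(t) + B(t)X + ½C(t)X²),
with A, B, C solving the full-information Riccati system, satisfies the
Hamilton–Jacobi PDE of the verification theorem with penalty
ν* = -σX F_X/(Y F_Y) = -γσX(B(t) + C(t)X). -/
theorem F_satisfies_pde (γ r lam Xbar sigX ρ T : ℝ)
    (hγ : 0 < γ) (hγ1 : γ ≠ 1) (hr : 0 ≤ r) (hlam : 0 < lam) (hsig : 0 < sigX)
    (hρ : ρ ∈ Set.Icc (-1 : ℝ) 1)
    (A B C : ℝ → ℝ)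
    (hA : ∀ t ∈ Set.Icc 0 T, HasDerivAt A
      ((γ - 1) / γ * r - lam * Xbar * B t - sigX ^ 2 * C t / 2
        - (sigX ^ 2 * (ρ ^ 2 + γ * (1 - ρ ^ 2))) * (B t) ^ 2 / 2) t)
    (hB : ∀ t ∈ Set.Icc 0 T, HasDerivAt B
      (-lam * Xbar * C t - ((2 * (-lam + (1 - γ) / γ * ρ * sigX)) / 2
        + (sigX ^ 2 * (ρ ^ 2 + γ * (1 - ρ ^ 2))) * C t) * B t) t)
    (hC : ∀ t ∈ Set.Icc 0 T, HasDerivAt C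
      (-((1 - γ) / γ ^ 2) - (2 * (-lam + (1 - γ) / γ * ρ * sigX)) * C t
        - (sigX ^ 2 * (ρ ^ 2 + γ * (1 - ρ ^ 2))) * (C t) ^ 2) t) :
    ∀ Y X t : ℝ, 0 < Y → t ∈ Set.Icc 0 T →
      let F : ℝ → ℝ → ℝ → ℝ := fun y x s =>
        y ^ ((1 : ℝ) / γ) * Real.exp (A s + B s * x + C s * x ^ 2 / 2)
      let FY := deriv (fun y => F y X t) Y
      let FYY := deriv (deriv (fun y => F y X t)) Y
      let FX := deriv (fun x => F Y x t) X
      let FXX := deriv (deriv (fun x => F Y x t)) X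
      let FXY := deriv (fun x => deriv (fun y => F y x t) Y) X
      let Ft := deriv (fun s => F Y X s) t
      let ν := -γ * sigX * (B t + C t * X)
      ν = -sigX * FX / (Y * FY) ∧
      (1 / 2) * FYY * Y ^ 2 * (X ^ 2 + ν ^ 2 * (1 - ρ ^ 2))
        + FXY * Y * sigX * (ρ * X + ν * (1 - ρ ^ 2))
        + (1 / 2) * FXX * sigX ^ 2
        - FX * (sigX * (ρ * X + ν * (1 - ρ ^ 2)) + lam * (X - Xbar))
        + Ft - r * F Y X t + r * FY * Y = 0 := by
  intro Y X t hY ht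
  have hγ0 : γ ≠ 0 := ne_of_gt hγ
  have hY0 : Y ≠ 0 := ne_of_gt hY
  dsimp only
  -- abbreviations
  have hgx : ∀ x : ℝ, HasDerivAt (fun x => Real.exp (A t + B t * x + C t * x ^ 2 / 2))
      (Real.exp (A t + B t * x + C t * x ^ 2 / 2) * (B t + C t * x)) x := by
    intro x
    have h1 : HasDerivAt (fun x : ℝ => A t + B t * x + C t * x ^ 2 / 2)
        (B t + C t * x) x := by
      have ha : HasDerivAt (fun x : ℝ => A t + B t * x) (B t) x := by
        simpa using ((hasDerivAt_id x).const_mul (B t)).const_add (A t)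
      have hb : HasDerivAt (fun x : ℝ => C t * x ^ 2 / 2) (C t * x) x := by
        have := ((hasDerivAt_pow 2 x).const_mul (C t)).div_const 2
        refine this.congr_deriv ?_
        ring
      exact ha.add hb
    simpa using h1.exp
  set E : ℝ := Real.exp (A t + B t * X + C t * X ^ 2 / 2) with hEdef
  have hE0 : E ≠ 0 := Real.exp_ne_zero _
  -- FX
  have eFX : deriv (fun x => Y ^ ((1:ℝ)/γ) * Real.exp (A t + B t * x + C t * x ^ 2 / 2)) X
      = Y ^ ((1:ℝ)/γ) * (E * (B t + C t * X)) := ((hgx X).const_mul _).deriv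
  -- FXX
  have eFXfun : deriv (fun x => Y ^ ((1:ℝ)/γ) * Real.exp (A t + B t * x + C t * x ^ 2 / 2))
      = fun x => Y ^ ((1:ℝ)/γ) * (Real.exp (A t + B t * x + C t * x ^ 2 / 2) * (B t + C t * x)) :=
    funext fun x => ((hgx x).const_mul _).deriv
  have eFXX : deriv (deriv (fun x => Y ^ ((1:ℝ)/γ) *
        Real.exp (A t + B t * x + C t * x ^ 2 / 2))) X
      = Y ^ ((1:ℝ)/γ) * (E * (B t + C t * X) * (B t + C t * X) + E * C t) := by
    rw [eFXfun]
    have hD : HasDerivAt (fun x : ℝ => B t + C t * x) (C t) X := by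
      simpa using ((hasDerivAt_id X).const_mul (C t)).const_add (B t)
    exact (((hgx X).mul hD).const_mul _).deriv
  -- FY
  have hYd : HasDerivAt (fun y : ℝ => y ^ ((1:ℝ)/γ))
      ((1/γ) * Y ^ ((1:ℝ)/γ - 1)) Y := Real.hasDerivAt_rpow_const (Or.inl hY0)
  have eFY : deriv (fun y => y ^ ((1:ℝ)/γ) * Real.exp (A t + B t * X + C t * X ^ 2 / 2)) Y
      = (1/γ) * Y ^ ((1:ℝ)/γ - 1) * E := (hYd.mul_const E).deriv
  -- FYY
  have eFYfun : deriv (fun y => y ^ ((1:ℝ)/γ) * Real.exp (A t + B t * X + C t * X ^ 2 / 2))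
      =ᶠ[nhds Y] fun y => (1/γ) * y ^ ((1:ℝ)/γ - 1) * E := by
    filter_upwards [eventually_ne_nhds hY0] with y hy
    exact ((Real.hasDerivAt_rpow_const (Or.inl hy)).mul_const E).deriv
  have eFYY : deriv (deriv (fun y => y ^ ((1:ℝ)/γ) *
        Real.exp (A t + B t * X + C t * X ^ 2 / 2))) Y
      = (1/γ) * ((1/γ - 1) * Y ^ ((1:ℝ)/γ - 1 - 1)) * E := by
    rw [eFYfun.deriv_eq]
    exact (((Real.hasDerivAt_rpow_const (p := (1:ℝ)/γ - 1) (Or.inl hY0)).const_mul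
      ((1:ℝ)/γ)).mul_const E).deriv
  -- FXY
  have eFXYfun : (fun x => deriv (fun y => y ^ ((1:ℝ)/γ) *
        Real.exp (A t + B t * x + C t * x ^ 2 / 2)) Y)
      = fun x => (1/γ) * Y ^ ((1:ℝ)/γ - 1) *
          Real.exp (A t + B t * x + C t * x ^ 2 / 2) :=
    funext fun x => (hYd.mul_const _).deriv
  have eFXY : deriv (fun x => deriv (fun y => y ^ ((1:ℝ)/γ) *
        Real.exp (A t + B t * x + C t * x ^ 2 / 2)) Y) X
      = (1/γ) * Y ^ ((1:ℝ)/γ - 1) * (E * (B t + C t * X)) := by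
    rw [eFXYfun]
    exact ((hgx X).const_mul _).deriv
  -- Ft
  have hAt := hA t ht
  have hBt := hB t ht
  have hCt := hC t ht
  have hinner : HasDerivAt (fun s => A s + B s * X + C s * X ^ 2 / 2)
      (((γ - 1) / γ * r - lam * Xbar * B t - sigX ^ 2 * C t / 2
        - (sigX ^ 2 * (ρ ^ 2 + γ * (1 - ρ ^ 2))) * (B t) ^ 2 / 2)
       + (-lam * Xbar * C t - ((2 * (-lam + (1 - γ) / γ * ρ * sigX)) / 2
        + (sigX ^ 2 * (ρ ^ 2 + γ * (1 - ρ ^ 2))) * C t) * B t) * X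
       + (-((1 - γ) / γ ^ 2) - (2 * (-lam + (1 - γ) / γ * ρ * sigX)) * C t
        - (sigX ^ 2 * (ρ ^ 2 + γ * (1 - ρ ^ 2))) * (C t) ^ 2) * X ^ 2 / 2) t :=
    (hAt.add (hBt.mul_const X)).add ((hCt.mul_const (X ^ 2)).div_const 2)
  have eFt : deriv (fun s => Y ^ ((1:ℝ)/γ) *
        Real.exp (A s + B s * X + C s * X ^ 2 / 2)) t
      = Y ^ ((1:ℝ)/γ) * (E *
        (((γ - 1) / γ * r - lam * Xbar * B t - sigX ^ 2 * C t / 2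
          - (sigX ^ 2 * (ρ ^ 2 + γ * (1 - ρ ^ 2))) * (B t) ^ 2 / 2)
         + (-lam * Xbar * C t - ((2 * (-lam + (1 - γ) / γ * ρ * sigX)) / 2
          + (sigX ^ 2 * (ρ ^ 2 + γ * (1 - ρ ^ 2))) * C t) * B t) * X
         + (-((1 - γ) / γ ^ 2) - (2 * (-lam + (1 - γ) / γ * ρ * sigX)) * C t
          - (sigX ^ 2 * (ρ ^ 2 + γ * (1 - ρ ^ 2))) * (C t) ^ 2) * X ^ 2 / 2)) :=
    ((hinner.exp).const_mul _).deriv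
  -- rpow relations
  have hP0 : Y ^ ((1:ℝ)/γ) ≠ 0 := ne_of_gt (Real.rpow_pos_of_pos hY _)
  have h1 : Y ^ ((1:ℝ)/γ - 1) = Y ^ ((1:ℝ)/γ) / Y := by
    rw [Real.rpow_sub hY, Real.rpow_one]
  have h2 : Y ^ ((1:ℝ)/γ - 1 - 1) = Y ^ ((1:ℝ)/γ) / Y ^ 2 := by
    rw [Real.rpow_sub hY, Real.rpow_sub hY, Real.rpow_one]
    ring
  rw [eFX, eFXX, eFY, eFYY, eFXY, eFt, h1, h2]
  constructor
  · field_simp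
  · field_simp
    ring
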